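/- Let q : Ĝ → G be a group homomorphism whose kernel A = ker q is contained in the center of Ĝ, ℤ₂ = {±1}, and let σ : ℤ₂ → Aut(G), σ̂ : ℤ₂ → Aut(Ĝ) be group homomorphisms satisfying q ∘ σ̂(ε) = σ(ε) ∘ q. Let I be a type, ε : I → I → ℤ₂ satisfy ε i j · ε j k = ε i k, let g : I → I → G satisfy g i j · σ(ε i j)(g j k) = g i k, and let ĝ : I → I → Ĝ satisfy q(ĝ i j) = g i j. Define a i j k := ĝ i j · σ̂(ε i j)(ĝ j k) · (ĝ i k)⁻¹. Then for all i,j,k,l one has the twisted Čech 2-cocycle identity a i j k · a i k l = σ̂(ε i j)(a j k l) · a i j l. -/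
import Mathlib


/-- With `A = ker q` central in `Ghat`, `ε` a `ℤ₂`-valued Čech 1-cocycle,
`g` a twisted `G`-valued cocycle and `ghat` lifts through `q`, the obstruction elements
`a i j k = ghat i j · σ̂(ε i j)(ghat j k) · (ghat i k)⁻¹` satisfy the twisted Čech 2-cocycle
identity `a i j k · a i k l = σ̂(ε i j)(a j k l) · a i j l`. -/
theorem twisted_two_cocycle_identity {Ghat G : Type*} [Group Ghat] [Group G] (q : Ghat →* G)
    (hcentral : q.ker ≤ Subgroup.center Ghat)
    (σ : ℤˣ →* MulAut G) (σh : ℤˣ →* MulAut Ghat)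
    (hcompat : ∀ (ε : ℤˣ) (x : Ghat), q (σh ε x) = σ ε (q x))
    {I : Type*} (ε : I → I → ℤˣ)
    (hε : ∀ i j k, ε i j * ε j k = ε i k)
    (g : I → I → G)
    (hg : ∀ i j k, g i j * σ (ε i j) (g j k) = g i k)
    (ghat : I → I → Ghat) (hlift : ∀ i j, q (ghat i j) = g i j)
    (a : I → I → I → Ghat)
    (ha : ∀ i j k, a i j k = ghat i j * σh (ε i j) (ghat j k) * (ghat i k)⁻¹) :
    ∀ i j k l, a i j k * a i k l = σh (ε i j) (a j k l) * a i j l := by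
  intro i j k l
  have hqa : q (a j k l) = 1 := by
    rw [ha, map_mul, map_mul, map_inv, hcompat, hlift, hlift, hlift, hg,
      mul_inv_cancel]
  have hc : ∀ x : Ghat, x * σh (ε i j) (a j k l) = σh (ε i j) (a j k l) * x := by
    intro x
    exact Subgroup.mem_center_iff.mp
      (hcentral (by rw [MonoidHom.mem_ker, hcompat, hqa, map_one])) x
  have hcomp : ∀ x : Ghat, σh (ε i j) (σh (ε j k) x) = σh (ε i k) x := by
    intro x; rw [← hε i j k, map_mul]; rfl
  calc a i j k * a i k l
      = ghat i j * σh (ε i j) (ghat j k) * σh (ε i k) (ghat k l) * (ghat i l)⁻¹ := by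
        rw [ha, ha]; group
    _ = ghat i j * σh (ε i j) (a j k l) * σh (ε i j) (ghat j l) * (ghat i l)⁻¹ := by
        rw [ha, map_mul, map_mul, map_inv, hcomp]; group
    _ = σh (ε i j) (a j k l) * (ghat i j * σh (ε i j) (ghat j l) * (ghat i l)⁻¹) := by
        rw [hc (ghat i j)]; group
    _ = σh (ε i j) (a j k l) * a i j l := by rw [ha i j l]
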